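/- Let X be a real random variable with E[X] = 0 and E[X^2] = γ² > 0, and let Z = (Z_1,...,Z_n) be a random vector independent of X with E[Z_i] = 0 for all i. Given ν_1,...,ν_n ∈ ℝ, define y_i = ν_i X + Z_i. Let K₁ be the n×n matrix with entries E[y_i y_j] and K₂ the covariance matrix of Z. If K₁ is invertible, then inf over w ∈ ℝⁿ of E[(w·y − X)²] equals γ² / (1 + SNR), where SNR = det(K₁)/det(K₂) − 1. -/

import Mathlib

open MeasureTheory ProbabilityTheory Matrix

private lemma l2_mul_integrable {Ω : Type*} [MeasurableSpace Ω] {μ : Measure Ω}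
    {f g : Ω → ℝ} (hf : MemLp f 2 μ) (hg : MemLp g 2 μ) :
    Integrable (fun ω => f ω * g ω) μ := by
  have h := (((hf.add hg).integrable_sq.sub hf.integrable_sq).sub hg.integrable_sq).div_const 2
  have he : (fun ω => f ω * g ω)
      = fun ω => (((f + g) ω) ^ 2 - f ω ^ 2 - g ω ^ 2) / 2 := by
    funext ω; simp only [Pi.add_apply]; ring
  rw [he]; exact h

/-- Linear MMSE lemma: the infimum over linear estimators `w · y` of the mean squared
error of estimating a zero-mean signal `X` from observations `y i = ν i * X + Z i`
equals `γ² / (1 + SNR)` where `SNR = det K₁ / det K₂ − 1`. -/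
theorem stmt_0 {Ω : Type*} [MeasurableSpace Ω] (μ : Measure Ω) [IsProbabilityMeasure μ]
    {n : ℕ} (X : Ω → ℝ) (Z : Fin n → Ω → ℝ) (ν : Fin n → ℝ) (γ : ℝ)
    (hγ : 0 < γ)
    (hXmeas : Measurable X) (hZmeas : ∀ i, Measurable (Z i))
    (hXL2 : MemLp X 2 μ) (hZL2 : ∀ i, MemLp (Z i) 2 μ)
    (hXmean : ∫ ω, X ω ∂μ = 0) (hXvar : ∫ ω, (X ω) ^ 2 ∂μ = γ ^ 2)
    (hZmean : ∀ i, ∫ ω, Z i ω ∂μ = 0)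
    (hindep : IndepFun X (fun ω i => Z i ω) μ)
    (y : Fin n → Ω → ℝ) (hy : ∀ i ω, y i ω = ν i * X ω + Z i ω)
    (K₁ K₂ : Matrix (Fin n) (Fin n) ℝ)
    (hK₁ : ∀ i j, K₁ i j = ∫ ω, y i ω * y j ω ∂μ)
    (hK₂ : ∀ i j, K₂ i j = ∫ ω, Z i ω * Z j ω ∂μ)
    (hK₁inv : IsUnit K₁.det) :
    (⨅ w : Fin n → ℝ, ∫ ω, ((∑ i, w i * y i ω) - X ω) ^ 2 ∂μ)
      = γ ^ 2 / (1 + (K₁.det / K₂.det - 1)) := by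
  -- basic L² facts
  have hyL2 : ∀ i, MemLp (y i) 2 μ := fun i => by
    have : y i = fun ω => ν i * X ω + Z i ω := funext (hy i)
    rw [this]; exact (hXL2.const_mul _).add (hZL2 i)
  have hXint : Integrable X μ := hXL2.integrable one_le_two
  have hZint : ∀ i, Integrable (Z i) μ := fun i => (hZL2 i).integrable one_le_two
  -- independence of X and Z i
  have hindep' : ∀ i, IndepFun X (Z i) μ := fun i => by
    have := hindep.comp measurable_id (measurable_pi_apply i)
    exact this
  have hXZ : ∀ i, ∫ ω, X ω * Z i ω ∂μ = 0 := fun i => by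
    have h := (hindep' i).integral_mul_eq_mul_integral hXint.aestronglyMeasurable (hZint i).aestronglyMeasurable
    simp only [Pi.mul_apply] at h
    rw [show (∫ ω, X ω * Z i ω ∂μ) = ∫ ω, (X * Z i) ω ∂μ from rfl]
    exact h.trans (by rw [hXmean, zero_mul])
  -- E[y i * X] = ν i * γ²
  have hyX : ∀ i, ∫ ω, y i ω * X ω ∂μ = ν i * γ ^ 2 := fun i => by
    have he : ∀ ω, y i ω * X ω = ν i * X ω ^ 2 + X ω * Z i ω := by
      intro ω; rw [hy]; ring
    simp_rw [he]
    have h1 : Integrable (fun ω => ν i * X ω ^ 2) μ := (hXL2.integrable_sq).const_mul _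
    rw [integral_add h1 (l2_mul_integrable hXL2 (hZL2 i)),
      integral_const_mul, hXvar, hXZ, add_zero]
  -- K₂ in terms of K₁
  have hK₂eq : ∀ i j, K₂ i j = K₁ i j + (-(γ ^ 2) * ν i) * ν j := fun i j => by
    have he : ∀ ω, y i ω * y j ω
        = (ν i * ν j) * X ω ^ 2 + (ν i * (X ω * Z j ω) + ν j * (X ω * Z i ω))
          + Z i ω * Z j ω := by
      intro ω; rw [hy, hy]; ring
    have hint1 : Integrable (fun ω => (ν i * ν j) * X ω ^ 2) μ :=
      (hXL2.integrable_sq).const_mul _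
    have hint2 : Integrable (fun ω => ν i * (X ω * Z j ω) + ν j * (X ω * Z i ω)) μ :=
      ((l2_mul_integrable hXL2 (hZL2 j)).const_mul _).add
        ((l2_mul_integrable hXL2 (hZL2 i)).const_mul _)
    have hint3 : Integrable (fun ω => Z i ω * Z j ω) μ :=
      l2_mul_integrable (hZL2 i) (hZL2 j)
    have hint2a : Integrable (fun ω => ν i * (X ω * Z j ω)) μ :=
      (l2_mul_integrable hXL2 (hZL2 j)).const_mul _
    have hint2b : Integrable (fun ω => ν j * (X ω * Z i ω)) μ :=
      (l2_mul_integrable hXL2 (hZL2 i)).const_mul _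
    have hint12 : Integrable (fun ω => (ν i * ν j) * X ω ^ 2
        + (ν i * (X ω * Z j ω) + ν j * (X ω * Z i ω))) μ := hint1.add hint2
    have : K₁ i j = (ν i * ν j) * γ ^ 2 + K₂ i j := by
      rw [hK₁, hK₂]
      simp_rw [he]
      rw [integral_add hint12 hint3, integral_add hint1 hint2,
        integral_add hint2a hint2b,
        integral_const_mul, integral_const_mul, integral_const_mul,
        hXvar, hXZ, hXZ]
      ring
    rw [this]; ring
  -- dot product algebra
  have hdot : ∀ a b : Fin n → ℝ, a ⬝ᵥ K₁ *ᵥ b = ∑ i, ∑ j, a i * K₁ i j * b j := by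
    intro a b
    simp only [dotProduct, mulVec, Finset.mul_sum]
    exact Finset.sum_congr rfl fun i _ => Finset.sum_congr rfl fun j _ => by ring
  have hsymm : ∀ i j, K₁ i j = K₁ j i := fun i j => by
    rw [hK₁, hK₁]
    have : ∀ ω, y i ω * y j ω = y j ω * y i ω := fun ω => mul_comm _ _
    simp_rw [this]
  have hdsymm : ∀ a b : Fin n → ℝ, a ⬝ᵥ K₁ *ᵥ b = b ⬝ᵥ K₁ *ᵥ a := by
    intro a b
    rw [hdot, hdot, Finset.sum_comm]
    exact Finset.sum_congr rfl fun x _ => Finset.sum_congr rfl fun z _ => by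
      rw [hsymm z x]; ring
  -- L² of linear combinations
  have hSL2 : ∀ w : Fin n → ℝ, MemLp (fun ω => ∑ i, w i * y i ω) 2 μ := fun w =>
    memLp_finset_sum _ (fun i _ => (hyL2 i).const_mul _)
  -- value of quadratic form
  have hAint : ∀ (w : Fin n → ℝ) i (j : Fin n),
      Integrable (fun ω => (w i * w j) * (y i ω * y j ω)) μ :=
    fun w i j => (l2_mul_integrable (hyL2 i) (hyL2 j)).const_mul _
  have hA : ∀ w : Fin n → ℝ, ∫ ω, (∑ i, w i * y i ω) ^ 2 ∂μ = w ⬝ᵥ K₁ *ᵥ w := by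
    intro w
    have he : ∀ ω, (∑ i, w i * y i ω) ^ 2
        = ∑ i, ∑ j, (w i * w j) * (y i ω * y j ω) := by
      intro ω
      rw [sq, Finset.sum_mul_sum]
      exact Finset.sum_congr rfl fun i _ => Finset.sum_congr rfl fun j _ => by ring
    simp_rw [he]
    rw [hdot,
      integral_finset_sum _ (fun i _ => integrable_finset_sum _ fun j _ => hAint w i j)]
    refine Finset.sum_congr rfl fun i _ => ?_
    rw [integral_finset_sum _ (fun j _ => hAint w i j)]
    refine Finset.sum_congr rfl fun j _ => ?_
    rw [integral_const_mul, ← hK₁]; ring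
  have hApos : ∀ v : Fin n → ℝ, 0 ≤ v ⬝ᵥ K₁ *ᵥ v := fun v => by
    rw [← hA v]; exact integral_nonneg fun ω => sq_nonneg _
  -- cross term
  have hB : ∀ w : Fin n → ℝ, ∫ ω, (∑ i, w i * y i ω) * X ω ∂μ = γ ^ 2 * (w ⬝ᵥ ν) := by
    intro w
    have he : ∀ ω, (∑ i, w i * y i ω) * X ω = ∑ i, w i * (y i ω * X ω) := by
      intro ω; rw [Finset.sum_mul]
      exact Finset.sum_congr rfl fun i _ => by ring
    simp_rw [he]
    rw [integral_finset_sum _ (fun i _ => (l2_mul_integrable (hyL2 i) hXL2).const_mul _)]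
    simp_rw [integral_const_mul, hyX, dotProduct, Finset.mul_sum]
    exact Finset.sum_congr rfl fun i _ => by ring
  -- MSE expansion
  have hf : ∀ w : Fin n → ℝ, ∫ ω, ((∑ i, w i * y i ω) - X ω) ^ 2 ∂μ
      = w ⬝ᵥ K₁ *ᵥ w - 2 * γ ^ 2 * (w ⬝ᵥ ν) + γ ^ 2 := by
    intro w
    have he : ∀ ω, ((∑ i, w i * y i ω) - X ω) ^ 2
        = (∑ i, w i * y i ω) ^ 2 - 2 * ((∑ i, w i * y i ω) * X ω) + X ω ^ 2 :=
      fun ω => by ring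
    have hi1 : Integrable (fun ω => (∑ i, w i * y i ω) ^ 2) μ := (hSL2 w).integrable_sq
    have hi2 : Integrable (fun ω => 2 * ((∑ i, w i * y i ω) * X ω)) μ :=
      (l2_mul_integrable (hSL2 w) hXL2).const_mul _
    have hi12 : Integrable
        (fun ω => (∑ i, w i * y i ω) ^ 2 - 2 * ((∑ i, w i * y i ω) * X ω)) μ :=
      hi1.sub hi2
    simp_rw [he]
    rw [integral_add hi12 hXL2.integrable_sq, integral_sub hi1 hi2,
      integral_const_mul, hA, hB, hXvar]
    ring
  -- optimal weights
  set u : Fin n → ℝ := K₁⁻¹ *ᵥ ν with hu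
  set c : ℝ := ν ⬝ᵥ u with hc
  have hKu : K₁ *ᵥ u = ν := by
    rw [hu, mulVec_mulVec, Matrix.mul_nonsing_inv _ hK₁inv, one_mulVec]
  set w₀ : Fin n → ℝ := γ ^ 2 • u with hw₀
  have hw₀ν : w₀ ⬝ᵥ ν = γ ^ 2 * c := by
    rw [hw₀, smul_dotProduct, dotProduct_comm, ← hc, smul_eq_mul]
  have hKw₀ : K₁ *ᵥ w₀ = γ ^ 2 • ν := by rw [hw₀, mulVec_smul, hKu]
  have hcross : ∀ a : Fin n → ℝ, a ⬝ᵥ K₁ *ᵥ w₀ = γ ^ 2 * (a ⬝ᵥ ν) := fun a => by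
    rw [hKw₀, dotProduct_smul, smul_eq_mul]
  have hQw₀ : w₀ ⬝ᵥ K₁ *ᵥ w₀ = γ ^ 4 * c := by
    rw [hcross w₀, hw₀ν]; ring
  -- minimality
  have hmin : ∀ w : Fin n → ℝ,
      γ ^ 2 - γ ^ 4 * c ≤ w ⬝ᵥ K₁ *ᵥ w - 2 * γ ^ 2 * (w ⬝ᵥ ν) + γ ^ 2 := by
    intro w
    have hexp : (w - w₀) ⬝ᵥ K₁ *ᵥ (w - w₀)
        = w ⬝ᵥ K₁ *ᵥ w - 2 * γ ^ 2 * (w ⬝ᵥ ν) + γ ^ 4 * c := by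
      rw [sub_dotProduct, mulVec_sub, dotProduct_sub, dotProduct_sub,
        hcross w, hdsymm w₀ w, hcross w, hQw₀]
      ring
    have := hApos (w - w₀)
    rw [hexp] at this
    linarith
  -- determinant identity
  have hdet : K₂.det = K₁.det * (1 - γ ^ 2 * c) := by
    have hK₂m : K₂ = K₁ + replicateCol Unit (-(γ ^ 2) • ν) * replicateRow Unit ν := by
      ext i j
      rw [hK₂eq]
      simp [Matrix.mul_apply, Matrix.replicateCol_apply, Matrix.replicateRow_apply]
    rw [hK₂m, det_add_replicateCol_mul_replicateRow hK₁inv]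
    congr 1
    rw [det_unique, Matrix.add_apply, Matrix.one_apply_eq, ← Matrix.replicateRow_vecMul,
      Matrix.replicateRow_mul_replicateCol_apply, dotProduct_smul, ← dotProduct_mulVec, ← hu, ← hc,
      smul_eq_mul]
    ring
  -- final computation
  have hval : γ ^ 2 / (1 + (K₁.det / K₂.det - 1)) = γ ^ 2 - γ ^ 4 * c := by
    have h1 : K₁.det ≠ 0 := hK₁inv.ne_zero
    rw [add_sub_cancel, hdet]
    by_cases ht : (1 - γ ^ 2 * c) = 0
    · rw [ht, mul_zero, div_zero, div_zero]
      have : γ ^ 2 * c = 1 := by linarith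
      nlinarith [this]
    · field_simp
  rw [hval]
  refine le_antisymm ?_ ?_
  · refine le_trans (ciInf_le ⟨0, ?_⟩ w₀) ?_
    · rintro x ⟨w, rfl⟩
      exact integral_nonneg fun ω => sq_nonneg _
    · rw [hf w₀, hQw₀, hw₀ν]; ring_nf; linarith
  · exact le_ciInf fun w => by rw [hf w]; exact hmin w
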